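/- Suppose 0 ≤ q ≤ 1 and q < u < 1, and suppose there exists a > 0 such that 0 ≤ Q(N) ≤ a N^{1+u} for all N ≥ 1. Then σ_C(N)² tends to 0 as N → ∞. (Second half of Corollary 1: the variance of the capacity of an IRS-aided MISO channel with sub-linearly growing IRS area and sub-linearly growing maximum spatial-correlation eigenvalue converges to zero, i.e., the end-to-end channel hardens.) -/

import Mathlib

open Filter Real

/-- Area of a single IRS reflecting element: `A_N = A₀ N^{-q}`. -/
noncomputable def irsElemArea (A₀ q : ℝ) (N : ℕ) : ℝ := A₀ * (N : ℝ) ^ (-q)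

/-- `ᾱ_N = α_r α_s A_N² / (1 + κ_r)`. -/
noncomputable def alphaBarN (A₀ αr αs κr q : ℝ) (N : ℕ) : ℝ :=
  αr * αs * (irsElemArea A₀ q N) ^ 2 / (1 + κr)

/-- `μ(N) = α_d A_M + κ_r ᾱ_N N² + ᾱ_N Q(N)`. -/
noncomputable def muN (A₀ αd αr αs AM κr q : ℝ) (Q : ℕ → ℝ) (N : ℕ) : ℝ :=
  αd * AM + κr * alphaBarN A₀ αr αs κr q N * (N : ℝ) ^ 2
    + alphaBarN A₀ αr αs κr q N * Q N

/-- `η(N) = α_d A_M / M + ᾱ_N Q(N)`. -/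
noncomputable def etaN (A₀ αd αr αs AM κr q : ℝ) (M : ℕ) (Q : ℕ → ℝ) (N : ℕ) : ℝ :=
  αd * AM / M + alphaBarN A₀ αr αs κr q N * Q N

/-- `ω(N) = 2 κ_r ᾱ_N N² + ᾱ_N Q(N)`. -/
noncomputable def omegaN (A₀ αr αs κr q : ℝ) (Q : ℕ → ℝ) (N : ℕ) : ℝ :=
  2 * κr * alphaBarN A₀ αr αs κr q N * (N : ℝ) ^ 2
    + alphaBarN A₀ αr αs κr q N * Q N

/-- Asymptotic standard deviation of the capacity:
`σ_C(N) = (ρ M log₂ e / (1 + ρ M μ(N))) √(ω(N) η(N) + η(N) + ((M-1)/M) α_d A_M)`. -/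
noncomputable def sigmaCap (A₀ αd αr αs AM ρ κr q : ℝ) (M : ℕ) (Q : ℕ → ℝ) (N : ℕ) : ℝ :=
  ρ * M * Real.logb 2 (Real.exp 1) / (1 + ρ * M * muN A₀ αd αr αs AM κr q Q N) *
    Real.sqrt (omegaN A₀ αr αs κr q Q N * etaN A₀ αd αr αs AM κr q M Q N
      + etaN A₀ αd αr αs AM κr q M Q N + ((M : ℝ) - 1) / M * (αd * AM))

/-- Second half of Corollary 1: under sub-linear IRS area scaling (`0 ≤ q ≤ 1`) and a
sub-linearly growing maximum correlation eigenvalue (`0 ≤ Q(N) ≤ a N^{1+u}`, `q < u < 1`),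
the asymptotic capacity variance `σ_C(N)²` converges to zero, i.e. the channel hardens. -/
theorem capacity_variance_tendsto_zero
    (A₀ αd αr αs AM ρ κr : ℝ) (hA₀ : 0 < A₀) (hαd : 0 < αd) (hαr : 0 < αr)
    (hαs : 0 < αs) (hAM : 0 < AM) (hρ : 0 < ρ) (hκr : 0 < κr)
    (M : ℕ) (hM : 1 ≤ M) (q u : ℝ) (hq0 : 0 ≤ q) (hq1 : q ≤ 1)
    (hqu : q < u) (hu1 : u < 1) (Q : ℕ → ℝ)
    (hQ : ∃ a : ℝ, 0 < a ∧ ∀ N : ℕ, 1 ≤ N → 0 ≤ Q N ∧ Q N ≤ a * (N : ℝ) ^ (1 + u)) :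
    Tendsto (fun N : ℕ => (sigmaCap A₀ αd αr αs AM ρ κr q M Q N) ^ 2)
      atTop (nhds 0) := by

  obtain ⟨a, ha, hQa⟩ := hQ
  have hκ1 : (0:ℝ) < 1 + κr := by linarith
  have hM0 : (0:ℝ) < M := by exact_mod_cast hM
  have hM1 : (1:ℝ) ≤ M := by exact_mod_cast hM
  set c : ℝ := αr * αs / (1 + κr) with hc_def
  have hc : 0 < c := by positivity
  set P : ℝ := ρ * M * Real.logb 2 (Real.exp 1) with hP_def
  set K₁ : ℝ := ρ * M * κr * (c * A₀ ^ 2) with hK1_def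
  have hK₁ : 0 < K₁ := by positivity
  set K₂ : ℝ := 2 * κr * (c * A₀ ^ 2) + c * A₀ ^ 2 * a with hK2_def
  have hK₂ : 0 < K₂ := by positivity
  set K₃ : ℝ := αd * AM + c * A₀ ^ 2 * a with hK3_def
  have hK₃ : 0 < K₃ := by positivity
  set K₄ : ℝ := K₂ * K₃ + K₃ + αd * AM with hK4_def
  have hK₄ : 0 < K₄ := by positivity
  set K₅ : ℝ := P ^ 2 * K₄ / K₁ ^ 2 with hK5_def
  clear_value c P K₁ K₂ K₃ K₄ K₅
  have hg : Tendsto (fun N : ℕ => K₅ * (N:ℝ) ^ (u - 1)) atTop (nhds 0) := by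
    have h1 : Tendsto (fun x : ℝ => x ^ (-(1 - u))) atTop (nhds 0) :=
      tendsto_rpow_neg_atTop (by linarith)
    have h2 : Tendsto (fun N : ℕ => ((N:ℝ)) ^ (u - 1)) atTop (nhds 0) := by
      have := h1.comp (tendsto_natCast_atTop_atTop (R := ℝ))
      simpa [Function.comp_def, show -(1 - u) = u - 1 by ring] using this
    simpa using h2.const_mul K₅
  refine squeeze_zero' ?_ ?_ hg
  · filter_upwards with N; positivity
  · filter_upwards [eventually_ge_atTop 1] with N hN
    have hn1 : (1:ℝ) ≤ (N:ℝ) := by exact_mod_cast hN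
    have hn0 : (0:ℝ) < (N:ℝ) := by linarith
    obtain ⟨hQ0, hQle⟩ := hQa N hN
    have hmono : ∀ x y : ℝ, x ≤ y → (N:ℝ) ^ x ≤ (N:ℝ) ^ y := fun x y h =>
      Real.rpow_le_rpow_of_exponent_le hn1 h
    have hpos : ∀ x : ℝ, 0 < (N:ℝ) ^ x := fun x => Real.rpow_pos_of_pos hn0 x
    have honele : ∀ x : ℝ, 0 ≤ x → 1 ≤ (N:ℝ) ^ x := fun x hx => by
      have := hmono 0 x hx; rwa [Real.rpow_zero] at this
    have hbval : alphaBarN A₀ αr αs κr q N = c * A₀ ^ 2 * (N:ℝ) ^ (-(2*q)) := by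
      have hsq : ((N:ℝ) ^ (-q)) ^ 2 = (N:ℝ) ^ (-(2*q)) := by
        rw [sq, ← Real.rpow_add hn0]
        congr 1; ring
      unfold alphaBarN irsElemArea
      rw [mul_pow, hsq, hc_def]
      ring
    have hb0 : 0 < alphaBarN A₀ αr αs κr q N := by rw [hbval]; positivity
    have hbn2 : alphaBarN A₀ αr αs κr q N * (N:ℝ) ^ 2 = c * A₀ ^ 2 * (N:ℝ) ^ (2 - 2*q) := by
      rw [hbval, show ((N:ℝ) ^ 2 : ℝ) = (N:ℝ) ^ ((2:ℕ):ℝ) from (Real.rpow_natCast _ 2).symm,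
        mul_assoc, ← Real.rpow_add hn0]
      congr 1; push_cast; ring
    have hbQ0 : 0 ≤ alphaBarN A₀ αr αs κr q N * Q N := mul_nonneg hb0.le hQ0
    have hbQ : alphaBarN A₀ αr αs κr q N * Q N ≤ c * A₀ ^ 2 * a * (N:ℝ) ^ (1 + u - 2*q) := by
      calc alphaBarN A₀ αr αs κr q N * Q N
          ≤ alphaBarN A₀ αr αs κr q N * (a * (N:ℝ) ^ (1 + u)) :=
            mul_le_mul_of_nonneg_left hQle hb0.le
        _ = c * A₀ ^ 2 * a * (N:ℝ) ^ (1 + u - 2*q) := by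
            rw [hbval, show c * A₀ ^ 2 * (N:ℝ) ^ (-(2*q)) * (a * (N:ℝ) ^ (1 + u))
              = c * A₀ ^ 2 * a * ((N:ℝ) ^ (-(2*q)) * (N:ℝ) ^ (1 + u)) by ring,
              ← Real.rpow_add hn0]
            congr 1; ring
    -- eta bounds
    have hη0 : 0 ≤ etaN A₀ αd αr αs AM κr q M Q N := by
      unfold etaN; positivity
    have hη : etaN A₀ αd αr αs AM κr q M Q N ≤ K₃ * (N:ℝ) ^ (1 + u - 2*q) := by
      have h1 : αd * AM / M ≤ αd * AM * (N:ℝ) ^ (1 + u - 2*q) := by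
        have e1 : αd * AM / M ≤ αd * AM := by
          apply div_le_self (by positivity) hM1
        have e2 : αd * AM ≤ αd * AM * (N:ℝ) ^ (1 + u - 2*q) :=
          le_mul_of_one_le_right (by positivity) (honele _ (by linarith))
        linarith
      unfold etaN
      rw [hK3_def]
      have hexp : (αd * AM + c * A₀ ^ 2 * a) * (N:ℝ) ^ (1 + u - 2*q)
          = αd * AM * (N:ℝ) ^ (1 + u - 2*q) + c * A₀ ^ 2 * a * (N:ℝ) ^ (1 + u - 2*q) := by ring
      linarith [hbQ, h1]
    -- omega bounds
    have hω0 : 0 ≤ omegaN A₀ αr αs κr q Q N := by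
      unfold omegaN; positivity
    have hω : omegaN A₀ αr αs κr q Q N ≤ K₂ * (N:ℝ) ^ (2 - 2*q) := by
      unfold omegaN
      rw [mul_assoc, hbn2, hK2_def]
      have h2 : c * A₀ ^ 2 * a * (N:ℝ) ^ (1 + u - 2*q) ≤ c * A₀ ^ 2 * a * (N:ℝ) ^ (2 - 2*q) :=
        mul_le_mul_of_nonneg_left (hmono _ _ (by linarith)) (by positivity)
      have hexp : (2 * κr * (c * A₀ ^ 2) + c * A₀ ^ 2 * a) * (N:ℝ) ^ (2 - 2*q)
          = 2 * κr * (c * A₀ ^ 2 * (N:ℝ) ^ (2 - 2*q)) + c * A₀ ^ 2 * a * (N:ℝ) ^ (2 - 2*q) := by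
        ring
      linarith [hbQ]
    -- radicand
    set R : ℝ := omegaN A₀ αr αs κr q Q N * etaN A₀ αd αr αs AM κr q M Q N
      + etaN A₀ αd αr αs AM κr q M Q N + ((M : ℝ) - 1) / M * (αd * AM) with hR_def
    have hconst0 : 0 ≤ ((M : ℝ) - 1) / M * (αd * AM) := by
      apply mul_nonneg (div_nonneg (by linarith) hM0.le) (by positivity)
    have hR0 : 0 ≤ R := by
      rw [hR_def]
      have := mul_nonneg hω0 hη0
      linarith
    have hR : R ≤ K₄ * (N:ℝ) ^ (3 + u - 4*q) := by
      have hsplit : (N:ℝ) ^ (2 - 2*q) * (N:ℝ) ^ (1 + u - 2*q) = (N:ℝ) ^ (3 + u - 4*q) := by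
        rw [← Real.rpow_add hn0]; congr 1; ring
      have h1 : omegaN A₀ αr αs κr q Q N * etaN A₀ αd αr αs AM κr q M Q N
          ≤ K₂ * K₃ * (N:ℝ) ^ (3 + u - 4*q) := by
        calc omegaN A₀ αr αs κr q Q N * etaN A₀ αd αr αs AM κr q M Q N
            ≤ (K₂ * (N:ℝ) ^ (2 - 2*q)) * (K₃ * (N:ℝ) ^ (1 + u - 2*q)) :=
              mul_le_mul hω hη hη0 (by positivity)
          _ = K₂ * K₃ * ((N:ℝ) ^ (2 - 2*q) * (N:ℝ) ^ (1 + u - 2*q)) := by ring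
          _ = K₂ * K₃ * (N:ℝ) ^ (3 + u - 4*q) := by rw [hsplit]
      have h2 : etaN A₀ αd αr αs AM κr q M Q N ≤ K₃ * (N:ℝ) ^ (3 + u - 4*q) := by
        calc etaN A₀ αd αr αs AM κr q M Q N ≤ K₃ * (N:ℝ) ^ (1 + u - 2*q) := hη
          _ ≤ K₃ * (N:ℝ) ^ (3 + u - 4*q) :=
              mul_le_mul_of_nonneg_left (hmono _ _ (by linarith)) hK₃.le
      have h3 : ((M : ℝ) - 1) / M * (αd * AM) ≤ αd * AM * (N:ℝ) ^ (3 + u - 4*q) := by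
        have e1 : ((M : ℝ) - 1) / M ≤ 1 := by
          rw [div_le_one hM0]; linarith
        have e2 : ((M : ℝ) - 1) / M * (αd * AM) ≤ αd * AM :=
          mul_le_of_le_one_left (by positivity) e1
        have e3 : αd * AM ≤ αd * AM * (N:ℝ) ^ (3 + u - 4*q) :=
          le_mul_of_one_le_right (by positivity) (honele _ (by linarith))
        linarith
      rw [hR_def, hK4_def]
      linarith
    -- denominator
    set D : ℝ := 1 + ρ * M * muN A₀ αd αr αs AM κr q Q N with hD_def
    have hD : K₁ * (N:ℝ) ^ (2 - 2*q) ≤ D := by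
      rw [hD_def]
      unfold muN
      rw [mul_assoc κr, hbn2, hK1_def]
      have hexp : 1 + ρ * (M:ℝ) * (αd * AM + κr * (c * A₀ ^ 2 * (N:ℝ) ^ (2 - 2*q))
            + alphaBarN A₀ αr αs κr q N * Q N)
          = 1 + ρ * (M:ℝ) * (αd * AM)
            + ρ * (M:ℝ) * κr * (c * A₀ ^ 2) * (N:ℝ) ^ (2 - 2*q)
            + ρ * (M:ℝ) * (alphaBarN A₀ αr αs κr q N * Q N) := by ring
      have e1 : 0 ≤ ρ * (M:ℝ) * (αd * AM) := by positivity
      have e2 : 0 ≤ ρ * (M:ℝ) * (alphaBarN A₀ αr αs κr q N * Q N) :=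
        mul_nonneg (by positivity) hbQ0
      linarith
    have hD0 : 0 < D := lt_of_lt_of_le (by positivity) hD
    -- sigma squared
    have hsig : sigmaCap A₀ αd αr αs AM ρ κr q M Q N ^ 2 = P ^ 2 * R / D ^ 2 := by
      unfold sigmaCap
      rw [← hP_def, ← hD_def, ← hR_def, mul_pow, div_pow, Real.sq_sqrt hR0]
      ring
    rw [hsig]
    have hnum : P ^ 2 * R ≤ P ^ 2 * (K₄ * (N:ℝ) ^ (3 + u - 4*q)) :=
      mul_le_mul_of_nonneg_left hR (by positivity)
    have hden : (K₁ * (N:ℝ) ^ (2 - 2*q)) ^ 2 ≤ D ^ 2 :=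
      pow_le_pow_left₀ (by positivity) hD 2
    have hstep : P ^ 2 * R / D ^ 2 ≤ P ^ 2 * (K₄ * (N:ℝ) ^ (3 + u - 4*q))
        / (K₁ * (N:ℝ) ^ (2 - 2*q)) ^ 2 :=
      div_le_div₀ (by positivity) hnum (by positivity) hden
    refine hstep.trans (le_of_eq ?_)
    have hsplit2 : (N:ℝ) ^ (3 + u - 4*q) = (N:ℝ) ^ (u - 1) * ((N:ℝ) ^ (2 - 2*q)) ^ 2 := by
      rw [sq, ← Real.rpow_add hn0, ← Real.rpow_add hn0]; congr 1; ring
    rw [hsplit2, hK5_def, mul_pow]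
    field_simp
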